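/- arXiv:1408.3249 — 2 statements merged into one kernel-verified Lean document; each statement's English description precedes it below -/
import Mathlib

section
/- Let O be an integral domain, p^m a power of a prime with p^(m+1) ≠ 0 in O, and let f, g, h_{a,b} ∈ O[[q]] with f = φ + p·f₁, g = φ + p·g₁. Suppose T is an O-linear operator on O[[q]] with T f = (α + p·λ₁)·f and T g = (α + p·μ₁)·g. Then for any a, b ∈ O with a + b invertible, setting h = (a·f + b·g)/(a+b), one has T h ≡ (α + p·(a·λ₁ + b·μ₁)/(a+b))·h modulo p² (i.e., the difference lies in p²·O[[q]]). -/
open PowerSeries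

/-- The Calegari–Emerton construction.  Let `O` be an integral domain, `p ∈ O` with
`p^(m+1) ≠ 0`, and `f = φ + p·f₁`, `g = φ + p·g₁` formal power series over `O`.  Suppose
`T` is an `O`-linear operator on `O[[q]]` with `T f = (α + p·λ₁)·f` and
`T g = (α + p·μ₁)·g`.  Then for any `a, b ∈ O` with `a + b` invertible, setting
`h = (a·f + b·g)/(a+b)`, one has `T h ≡ (α + p·(a·λ₁ + b·μ₁)/(a+b))·h` modulo `p²`,
i.e. the difference lies in `p²·O[[q]]`. -/
theorem calegari_emerton_weak_eigenform
    (O : Type*) [CommRing O] [IsDomain O]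
    (p : O) (m : ℕ) (hp : p ^ (m + 1) ≠ 0)
    (φ f₁ g₁ : PowerSeries O)
    (f g : PowerSeries O)
    (hf : f = φ + PowerSeries.C p * f₁)
    (hg : g = φ + PowerSeries.C p * g₁)
    (T : PowerSeries O →ₗ[O] PowerSeries O)
    (α lam₁ mu₁ : O)
    (hTf : T f = (α + p * lam₁) • f)
    (hTg : T g = (α + p * mu₁) • g)
    (a b : O) (hab : IsUnit (a + b))
    (h : PowerSeries O)
    (hh : h = (((hab.unit⁻¹ : Oˣ) : O)) • (a • f + b • g)) :
    ∃ s : PowerSeries O,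
      T h - (α + p * (((hab.unit⁻¹ : Oˣ) : O) * (a * lam₁ + b * mu₁))) • h =
        PowerSeries.C (p ^ 2) * s := by

  set c : O := ((hab.unit⁻¹ : Oˣ) : O) with hc_def
  have hc : PowerSeries.C c * (PowerSeries.C a + PowerSeries.C b) = 1 := by
    rw [← map_add, ← map_mul]
    have : c * (a + b) = 1 := by
      simpa [hc_def] using hab.val_inv_mul
    rw [this, map_one]
  refine ⟨PowerSeries.C c * (PowerSeries.C (a * lam₁) * f₁ +
      PowerSeries.C (b * mu₁) * g₁ -
      PowerSeries.C (c * (a * lam₁ + b * mu₁)) *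
        (PowerSeries.C a * f₁ + PowerSeries.C b * g₁)), ?_⟩
  rw [hh, map_smul, map_add, map_smul, map_smul, hTf, hTg]
  simp only [smul_eq_C_mul, map_add, map_mul, map_pow, hf, hg]
  linear_combination (-(PowerSeries.C p * PowerSeries.C c *
    (PowerSeries.C a * PowerSeries.C lam₁ + PowerSeries.C b * PowerSeries.C mu₁) * φ)) * hc
end

section
/- Let R be a compact topological ring which is the projective limit of an inverse system of compact rings R_r with surjective transition maps, and let I ⊆ R be a closed ideal such that the quotient R/I is finite. Then there exists an index r such that the natural map R/I → R_r/π_r(I) is an isomorphism, where π_r: R → R_r is the projection. -/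
/-- Let `R` be a compact (Hausdorff) topological ring which is the projective limit of an
inverse system of compact Hausdorff rings `S r` (over a directed index set) with surjective
continuous transition maps; being the projective limit is expressed by the compatible
surjective continuous projections `π r : R →+* S r` separating the points of `R`.  Let
`I ⊆ R` be a closed ideal such that `R ⧸ I` is finite.  Then there is an index `r` such
that the natural map `R ⧸ I → S r ⧸ π_r(I)` is an isomorphism (a bijection). -/
theorem exists_level_realizing_finite_quotient
    (ι : Type*) [Preorder ι] [Nonempty ι]
    (hdir : ∀ r s : ι, ∃ t : ι, r ≤ t ∧ s ≤ t)
    (R : Type*) [CommRing R] [TopologicalSpace R] [IsTopologicalRing R]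
    [CompactSpace R] [T2Space R]
    (S : ι → Type*) [∀ r, CommRing (S r)] [∀ r, TopologicalSpace (S r)]
    [∀ r, IsTopologicalRing (S r)] [∀ r, CompactSpace (S r)] [∀ r, T2Space (S r)]
    (π : ∀ r : ι, R →+* S r)
    (hcont : ∀ r, Continuous (π r))
    (hsurj : ∀ r, Function.Surjective (π r))
    (t : ∀ {r s : ι}, r ≤ s → S s →+* S r)
    (htcont : ∀ {r s : ι} (h : r ≤ s), Continuous (t h))
    (htsurj : ∀ {r s : ι} (h : r ≤ s), Function.Surjective (t h))
    (hcompat : ∀ {r s : ι} (h : r ≤ s), (t h).comp (π s) = π r)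
    (hsep : ∀ x : R, x ≠ 0 → ∃ r, π r x ≠ 0)
    (I : Ideal R) (hclosed : IsClosed (I : Set R)) (hfin : Finite (R ⧸ I)) :
    ∃ r : ι, Function.Bijective
      (Ideal.quotientMap (I.map (π r)) (π r) Ideal.le_comap_map) := by
  -- `Iᶜ` is compact: it is a finite union of closed cosets.
  classical
  have hker_closed : ∀ r : ι, IsClosed ((RingHom.ker (π r) : Ideal R) : Set R) := fun r => by
    have : ((RingHom.ker (π r) : Ideal R) : Set R) = (π r) ⁻¹' {0} := by
      ext x; simp [RingHom.mem_ker]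
    rw [this]; exact (isClosed_singleton).preimage (hcont r)
  have hIc_closed : IsClosed ((I : Set R)ᶜ) := by
    have : ((I : Set R)ᶜ) =
        ⋃ y : {y : R ⧸ I // y ≠ 0}, (Ideal.Quotient.mk I) ⁻¹' {(y : R ⧸ I)} := by
      ext x
      simp only [Set.mem_compl_iff, SetLike.mem_coe, Set.mem_iUnion, Set.mem_preimage,
        Set.mem_singleton_iff]
      constructor
      · intro hx
        exact ⟨⟨Ideal.Quotient.mk I x, by simpa [Ideal.Quotient.eq_zero_iff_mem] using hx⟩, rfl⟩
      · rintro ⟨⟨y, hy⟩, rfl⟩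
        simpa [Ideal.Quotient.eq_zero_iff_mem] using hy
    rw [this]
    apply isClosed_iUnion_of_finite
    rintro ⟨y, hy⟩
    obtain ⟨z, rfl⟩ := Ideal.Quotient.mk_surjective y
    have : (Ideal.Quotient.mk I) ⁻¹' {(Ideal.Quotient.mk I z)} =
        (fun x : R => x - z) ⁻¹' (I : Set R) := by
      ext x
      simp [Ideal.Quotient.mk_eq_mk_iff_sub_mem]
    rw [this]
    exact hclosed.preimage (continuous_id.sub continuous_const)
  have hIc_compact : IsCompact ((I : Set R)ᶜ) := hIc_closed.isCompact
  -- intersection of kernels with `Iᶜ` is empty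
  have hempty : ((I : Set R)ᶜ) ∩ ⋂ r : ι, ((RingHom.ker (π r) : Ideal R) : Set R) = ∅ := by
    ext x
    simp only [Set.mem_inter_iff, Set.mem_compl_iff, SetLike.mem_coe, Set.mem_iInter,
      Set.mem_empty_iff_false, iff_false, not_and]
    intro hx h
    rcases eq_or_ne x 0 with rfl | hx0
    · exact hx (Submodule.zero_mem I)
    · obtain ⟨r, hr⟩ := hsep x hx0
      exact hr (h r)
  obtain ⟨u, hu⟩ := hIc_compact.elim_finite_subfamily_closed
    (fun r : ι => ((RingHom.ker (π r) : Ideal R) : Set R)) hker_closed (by rw [hempty])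
  -- find an upper bound of `u`
  have : IsDirected ι (· ≤ ·) := ⟨hdir⟩
  obtain ⟨r0, hr0⟩ := u.exists_le
  -- `ker (π r0) ≤ I`
  have hkerle : RingHom.ker (π r0) ≤ I := by
    intro x hx
    by_contra hxI
    have hxmem : x ∈ ((I : Set R)ᶜ) ∩ ⋂ r ∈ u, ((RingHom.ker (π r) : Ideal R) : Set R) := by
      refine ⟨hxI, ?_⟩
      simp only [Set.mem_iInter]
      intro r hr
      have h := hr0 r hr
      have : π r x = 0 := by
        have := congrArg (fun f : R →+* S r => f x) (hcompat h)
        simp only [RingHom.comp_apply] at this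
        rw [← this, show π r0 x = 0 from hx, map_zero]
      simpa [RingHom.mem_ker] using this
    rw [hu] at hxmem
    exact hxmem
  refine ⟨r0, ?_, Ideal.quotientMap_surjective (hsurj r0)⟩
  apply Ideal.quotientMap_injective'
  rw [Ideal.comap_map_of_surjective (π r0) (hsurj r0)]
  exact sup_le le_rfl hkerle
end
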